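/- Let $h>0$ and let $(\gamma_j)_{j\in\mathbb{Z}}$ be a positive summable sequence and $(w_j)_{j\in\mathbb{Z}^*}$ a nonnegative sequence with $w_j=w_{-j}$ for all $j\neq 0$. Assume there is $C_P>0$ such that $\gamma_j\gamma_k\le C_P(\gamma_j+\gamma_k)w_{j-k}$ for all $j\neq k$. Then for any square-summable (against $\gamma$) sequence $g=(g_j)_{j\in\mathbb{Z}}$ with $\sum_{j}g_j\gamma_j h=0$, one has $\sum_j g_j^2\gamma_j h \le \frac{C_P}{\sum_j \gamma_j h}\sum_{j\neq k} w_{j-k}(g_j-g_k)^2\gamma_k h^2$. -/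

import Mathlib

set_option maxHeartbeats 1000000 in
/-- discrete nonlocal Poincaré inequality on the lattice `hℤ`. -/
theorem stmt1 (h : ℝ) (hh : 0 < h) (γ : ℤ → ℝ) (w : ℤ → ℝ) (C_P : ℝ) (hCP : 0 < C_P)
    (hγpos : ∀ j, 0 < γ j)
    (hγsum : Summable γ)
    (hwnonneg : ∀ j, j ≠ 0 → 0 ≤ w j)
    (hwsymm : ∀ j : ℤ, j ≠ 0 → w j = w (-j))
    (hassump : ∀ j k : ℤ, j ≠ k → γ j * γ k ≤ C_P * (γ j + γ k) * w (j - k))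
    (g : ℤ → ℝ)
    (hg2 : Summable (fun j => g j ^ 2 * γ j * h))
    (hgsum : Summable (fun j => g j * γ j * h))
    (hdouble : Summable (fun p : ℤ × ℤ =>
      if p.1 = p.2 then 0 else w (p.1 - p.2) * (g p.1 - g p.2) ^ 2 * γ p.2 * h ^ 2))
    (hmean : ∑' j : ℤ, g j * γ j * h = 0) :
    ∑' j : ℤ, g j ^ 2 * γ j * h ≤
      C_P / (∑' j : ℤ, γ j * h) *
        ∑' p : ℤ × ℤ,
          (if p.1 = p.2 then 0 else w (p.1 - p.2) * (g p.1 - g p.2) ^ 2 * γ p.2 * h ^ 2) := by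
  have hγh : Summable (fun j : ℤ => γ j * h) := hγsum.mul_right h
  set M := ∑' j : ℤ, γ j * h with hMdef
  have hMpos : 0 < M :=
    Summable.tsum_pos hγh (fun j => (mul_pos (hγpos j) hh).le) 0 (mul_pos (hγpos 0) hh)
  set S := ∑' j : ℤ, g j ^ 2 * γ j * h with hSdef
  set G2 : ℤ × ℤ → ℝ := fun p =>
    if p.1 = p.2 then 0 else w (p.1 - p.2) * (g p.1 - g p.2) ^ 2 * γ p.2 * h ^ 2 with hG2def
  set D := ∑' p : ℤ × ℤ, G2 p with hDdef
  -- swapped version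
  have hswap : ∀ p : ℤ × ℤ, G2 p.swap =
      (if p.1 = p.2 then 0 else w (p.1 - p.2) * (g p.1 - g p.2) ^ 2 * γ p.1 * h ^ 2) := by
    intro p
    simp only [hG2def, Prod.fst_swap, Prod.snd_swap]
    by_cases hp : p.1 = p.2
    · simp [hp]
    · rw [if_neg (Ne.symm hp), if_neg hp]
      have hw : w (p.2 - p.1) = w (p.1 - p.2) := by
        rw [hwsymm (p.2 - p.1) (sub_ne_zero.mpr (Ne.symm hp)), neg_sub]
      rw [hw]; ring
  have hG1sum : Summable (fun p : ℤ × ℤ => G2 p.swap) := hdouble.prod_symm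
  have hG1tsum : ∑' p : ℤ × ℤ, G2 p.swap = D := by
    rw [hDdef]
    exact ((Equiv.prodComm ℤ ℤ).tsum_eq G2)
  -- nonnegativity of G2
  have hG2nonneg : ∀ p : ℤ × ℤ, 0 ≤ G2 p := by
    intro p
    simp only [hG2def]
    by_cases hp : p.1 = p.2
    · simp [hp]
    · rw [if_neg hp]
      have := hwnonneg (p.1 - p.2) (sub_ne_zero.mpr hp)
      have := (hγpos p.2).le
      positivity
  have hDnonneg : 0 ≤ D := tsum_nonneg hG2nonneg
  -- the symmetrized quadratic form
  set F : ℤ × ℤ → ℝ := fun p => (g p.1 - g p.2) ^ 2 * (γ p.1 * h) * (γ p.2 * h) with hFdef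
  have hA : Summable (fun p : ℤ × ℤ => (g p.1 ^ 2 * γ p.1 * h) * (γ p.2 * h)) :=
    hg2.mul_of_nonneg hγh
      (fun j => mul_nonneg (mul_nonneg (sq_nonneg _) (hγpos j).le) hh.le)
      (fun j => (mul_pos (hγpos j) hh).le)
  have hB : Summable (fun p : ℤ × ℤ => (g p.1 * γ p.1 * h) * (g p.2 * γ p.2 * h)) := by
    apply Summable.of_abs
    have := hgsum.abs.mul_of_nonneg hgsum.abs (fun j => abs_nonneg _) (fun j => abs_nonneg _)
    exact this.congr (fun p => (abs_mul _ _).symm)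
  have hC : Summable (fun p : ℤ × ℤ => (γ p.1 * h) * (g p.2 ^ 2 * γ p.2 * h)) :=
    hγh.mul_of_nonneg hg2
      (fun j => (mul_pos (hγpos j) hh).le)
      (fun j => mul_nonneg (mul_nonneg (sq_nonneg _) (hγpos j).le) hh.le)
  have hFsum : Summable F := by
    have := (hA.sub (hB.mul_left 2)).add hC
    refine this.congr (fun p => ?_)
    simp only [hFdef]
    ring
  have hg2n : Summable (fun j : ℤ => ‖g j ^ 2 * γ j * h‖) := by
    simpa only [Real.norm_eq_abs] using hg2.abs
  have hγhn : Summable (fun j : ℤ => ‖γ j * h‖) := by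
    simpa only [Real.norm_eq_abs] using hγh.abs
  have hgn : Summable (fun j : ℤ => ‖g j * γ j * h‖) := by
    simpa only [Real.norm_eq_abs] using hgsum.abs
  have hAt : ∑' p : ℤ × ℤ, (g p.1 ^ 2 * γ p.1 * h) * (γ p.2 * h) = S * M := by
    rw [hSdef, hMdef]
    exact (tsum_mul_tsum_of_summable_norm hg2n hγhn).symm
  have hBt : ∑' p : ℤ × ℤ, (g p.1 * γ p.1 * h) * (g p.2 * γ p.2 * h) = 0 := by
    rw [← tsum_mul_tsum_of_summable_norm hgn hgn,
      hmean, mul_zero]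
  have hCt : ∑' p : ℤ × ℤ, (γ p.1 * h) * (g p.2 ^ 2 * γ p.2 * h) = M * S := by
    rw [hSdef, hMdef]
    exact (tsum_mul_tsum_of_summable_norm hγhn hg2n).symm
  have hFt : ∑' p : ℤ × ℤ, F p = 2 * (M * S) := by
    have hre : F = fun p : ℤ × ℤ =>
        ((g p.1 ^ 2 * γ p.1 * h) * (γ p.2 * h) - 2 * ((g p.1 * γ p.1 * h) * (g p.2 * γ p.2 * h)))
          + (γ p.1 * h) * (g p.2 ^ 2 * γ p.2 * h) := by
      funext p; simp only [hFdef]; ring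
    rw [hre, Summable.tsum_add (hA.sub (hB.mul_left 2)) hC,
      Summable.tsum_sub hA (hB.mul_left 2), tsum_mul_left, hAt, hBt, hCt]
    ring
  -- pointwise bound
  have hpoint : ∀ p : ℤ × ℤ, F p ≤ C_P * (G2 p.swap + G2 p) := by
    intro p
    rw [hswap p]
    by_cases hp : p.1 = p.2
    · rw [if_pos hp]
      have hF0 : F p = 0 := by simp [hFdef, hp]
      rw [hF0, zero_add]
      exact mul_nonneg hCP.le (hG2nonneg p)
    · rw [if_neg hp]
      simp only [hFdef, hG2def, if_neg hp]
      have key := hassump p.1 p.2 hp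
      have hsq : (0:ℝ) ≤ (g p.1 - g p.2) ^ 2 * h ^ 2 := by positivity
      calc (g p.1 - g p.2) ^ 2 * (γ p.1 * h) * (γ p.2 * h)
          = ((g p.1 - g p.2) ^ 2 * h ^ 2) * (γ p.1 * γ p.2) := by ring
        _ ≤ ((g p.1 - g p.2) ^ 2 * h ^ 2) * (C_P * (γ p.1 + γ p.2) * w (p.1 - p.2)) :=
            mul_le_mul_of_nonneg_left key hsq
        _ = C_P * (w (p.1 - p.2) * (g p.1 - g p.2) ^ 2 * γ p.1 * h ^ 2
              + w (p.1 - p.2) * (g p.1 - g p.2) ^ 2 * γ p.2 * h ^ 2) := by ring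
  have hGsum : Summable (fun p : ℤ × ℤ => C_P * (G2 p.swap + G2 p)) :=
    ((hG1sum.add hdouble).mul_left C_P)
  have hmain : 2 * (M * S) ≤ C_P * (2 * D) := by
    rw [← hFt]
    calc ∑' p : ℤ × ℤ, F p ≤ ∑' p : ℤ × ℤ, C_P * (G2 p.swap + G2 p) :=
          Summable.tsum_le_tsum hpoint hFsum hGsum
      _ = C_P * (D + D) := by
          rw [tsum_mul_left, Summable.tsum_add hG1sum hdouble, hG1tsum]
      _ = C_P * (2 * D) := by ring
  have hMS : M * S ≤ C_P * D := by nlinarith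
  rw [div_mul_eq_mul_div, le_div_iff₀ hMpos]
  nlinarith
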